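/- Let α, β, γ be Gaussian integers forming a Pythagorean triple, i.e. α² + β² = γ². Then gcd(N(α), N(β), N(γ)) = 1 in ℤ if and only if every common divisor of α, β and γ in ℤ[i] is a unit. -/

import Mathlib

lemma gauss_star_dvd_of_dvd_star {a b : GaussianInt} (h : a ∣ star b) : star a ∣ b := by
  obtain ⟨c, hc⟩ := h
  refine ⟨star c, ?_⟩
  have := congrArg star hc
  simpa [star_mul'] using this

lemma gauss_prime_star {π : GaussianInt} (hπ : Prime π) : Prime (star π) :=
  (MulEquiv.prime_iff (starRingAut : GaussianInt ≃+* GaussianInt).toMulEquiv).mpr hπ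

lemma gauss_key (α β γ : GaussianInt) (hpyth : α ^ 2 + β ^ 2 = γ ^ 2)
    (h : ∀ δ : GaussianInt, δ ∣ α → δ ∣ β → δ ∣ γ → IsUnit δ)
    (π : GaussianInt) (hπ : Prime π) (hπγ : π ∣ γ)
    (hα : π ∣ α ∨ star π ∣ α) (hβ : π ∣ β ∨ star π ∣ β) : False := by
  rcases hα with hα | hα
  · have hβ2 : π ∣ β ^ 2 := by
      have : β ^ 2 = γ ^ 2 - α ^ 2 := by linear_combination hpyth
      rw [this]
      exact dvd_sub (hπγ.pow (by norm_num)) (hα.pow (by norm_num))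
    exact hπ.not_unit (h π hα (hπ.dvd_of_dvd_pow hβ2) hπγ)
  · rcases hβ with hβ | hβ
    · have hα2 : π ∣ α ^ 2 := by
        have : α ^ 2 = γ ^ 2 - β ^ 2 := by linear_combination hpyth
        rw [this]
        exact dvd_sub (hπγ.pow (by norm_num)) (hβ.pow (by norm_num))
      exact hπ.not_unit (h π (hπ.dvd_of_dvd_pow hα2) hβ hπγ)
    · have hπ' := gauss_prime_star hπ
      have hγ2 : star π ∣ γ ^ 2 := by
        rw [← hpyth]
        exact dvd_add (hα.pow (by norm_num)) (hβ.pow (by norm_num))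
      exact hπ'.not_unit (h (star π) hα hβ (hπ'.dvd_of_dvd_pow hγ2))

lemma gauss_dvd_or_star_dvd {a : GaussianInt} {p : ℕ} (π : GaussianInt) (hπ : Prime π)
    (hπp : π ∣ (p : GaussianInt)) (hpa : (p : ℤ) ∣ a.norm) : π ∣ a ∨ star π ∣ a := by
  have h1 : (p : GaussianInt) ∣ a * star a := by
    rw [← Zsqrtd.norm_eq_mul_conj]
    have := map_dvd (Int.castRingHom GaussianInt) hpa
    simpa using this
  rcases hπ.dvd_or_dvd (hπp.trans h1) with h | h
  · exact Or.inl h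
  · exact Or.inr (gauss_star_dvd_of_dvd_star h)

/-- for a Pythagorean triple `α² + β² = γ²` in `ℤ[i]`, the
norms have gcd 1 in `ℤ` if and only if every common divisor of `α`, `β`,
`γ` in `ℤ[i]` is a unit. -/
theorem pythagorean_triple_primitive_iff_coprime_norms (α β γ : GaussianInt)
    (hpyth : α ^ 2 + β ^ 2 = γ ^ 2) :
    Int.gcd (Int.gcd (Zsqrtd.norm α) (Zsqrtd.norm β)) (Zsqrtd.norm γ) = 1 ↔
      ∀ δ : GaussianInt, δ ∣ α → δ ∣ β → δ ∣ γ → IsUnit δ := by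
  constructor
  · intro hg δ hα hβ hγ
    have dα : δ.norm ∣ α.norm := by
      obtain ⟨c, rfl⟩ := hα; rw [Zsqrtd.norm_mul]; exact dvd_mul_right _ _
    have dβ : δ.norm ∣ β.norm := by
      obtain ⟨c, rfl⟩ := hβ; rw [Zsqrtd.norm_mul]; exact dvd_mul_right _ _
    have dγ : δ.norm ∣ γ.norm := by
      obtain ⟨c, rfl⟩ := hγ; rw [Zsqrtd.norm_mul]; exact dvd_mul_right _ _
    have : δ.norm ∣ (Int.gcd (Int.gcd (Zsqrtd.norm α) (Zsqrtd.norm β)) (Zsqrtd.norm γ) : ℤ) :=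
      Int.dvd_coe_gcd (Int.dvd_coe_gcd dα dβ) dγ
    rw [hg] at this
    rw [← Zsqrtd.norm_eq_one_iff]
    exact Int.isUnit_iff_natAbs_eq.mp (isUnit_of_dvd_one (by exact_mod_cast this))
  · intro h
    by_contra hg
    obtain ⟨p, hp, hpg⟩ := Nat.exists_prime_and_dvd hg
    have hpg' : (p : ℤ) ∣ (Int.gcd (Int.gcd (Zsqrtd.norm α) (Zsqrtd.norm β)) (Zsqrtd.norm γ) : ℤ) :=
      Int.natCast_dvd_natCast.mpr hpg
    have hpγ : (p : ℤ) ∣ γ.norm := hpg'.trans (Int.gcd_dvd_right _ _)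
    have hpab : (p : ℤ) ∣ ((Int.gcd (Zsqrtd.norm α) (Zsqrtd.norm β) : ℕ) : ℤ) :=
      hpg'.trans (Int.gcd_dvd_left _ _)
    have hpα : (p : ℤ) ∣ α.norm := hpab.trans (Int.gcd_dvd_left _ _)
    have hpβ : (p : ℤ) ∣ β.norm := hpab.trans (Int.gcd_dvd_right _ _)
    -- `p` is a nonzero nonunit in ℤ[i]
    have hne0 : (p : GaussianInt) ≠ 0 := by
      exact_mod_cast Nat.cast_ne_zero.mpr hp.ne_zero
    have hnu : ¬IsUnit (p : GaussianInt) := by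
      rw [← Zsqrtd.norm_eq_one_iff]
      have : ((p : GaussianInt)).norm = (p : ℤ) * (p : ℤ) := by
        have := Zsqrtd.norm_intCast (d := -1) (p : ℤ)
        exact_mod_cast this
      rw [this]
      simp [Int.natAbs_mul]
      intro h1
      exact hp.one_lt.ne' h1
    obtain ⟨π, hπirr, hπp⟩ := WfDvdMonoid.exists_irreducible_factor hnu hne0
    have hπ : Prime π := hπirr.prime
    have hα := gauss_dvd_or_star_dvd π hπ hπp hpα
    have hβ := gauss_dvd_or_star_dvd π hπ hπp hpβ
    have hγ := gauss_dvd_or_star_dvd π hπ hπp hpγ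
    rcases hγ with hγ | hγ
    · exact gauss_key α β γ hpyth h π hπ hγ hα hβ
    · refine gauss_key α β γ hpyth h (star π) (gauss_prime_star hπ) hγ ?_ ?_
      · rw [star_star]; exact hα.symm
      · rw [star_star]; exact hβ.symm
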